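/- arXiv:2002.11512 — 4 statements merged into one kernel-verified Lean document; each statement's English description precedes it below -/
import Mathlib

section
/- For every infinite-dimensional separable real Banach space B there exist a separable real Hilbert space H and a continuous injective linear map j : B → H whose range is dense in H (so that B embeds in H as a continuous dense subspace). -/
/-- **Kuelbs' Lemma.** Every infinite-dimensional separable real Banach space `B`
embeds into some separable real Hilbert space `H` as a continuous dense subspace,
i.e. there is a bounded injective linear operator `j : B → H` with dense range. -/
theorem kuelbs_lemma (B : Type) [NormedAddCommGroup B] [NormedSpace ℝ B]
    [CompleteSpace B] [TopologicalSpace.SeparableSpace B]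
    (hinf : ¬ FiniteDimensional ℝ B) :
    ∃ (H : Type) (_ : NormedAddCommGroup H) (_ : InnerProductSpace ℝ H),
      CompleteSpace H ∧ TopologicalSpace.SeparableSpace H ∧
        ∃ j : B →L[ℝ] H, Function.Injective j ∧ DenseRange j := by
  classical
  -- a dense sequence
  obtain ⟨u, hu⟩ := TopologicalSpace.exists_dense_seq B
  -- a countable family of norm-≤1 functionals norming the `u n`
  have hex : ∀ n : ℕ, ∃ g : B →L[ℝ] ℝ, ‖g‖ ≤ 1 ∧ (u n ≠ 0 → g (u n) = ‖u n‖) := by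
    intro n
    by_cases h : u n = 0
    · exact ⟨0, by simp, fun h' => absurd h h'⟩
    · obtain ⟨g, hg1, hg2⟩ := exists_dual_vector ℝ (u n) (norm_ne_zero_iff.mpr h)
      exact ⟨g, le_of_eq hg1, fun _ => hg2⟩
  choose f hf1 hf2 using hex
  -- the family separates points
  have hsep : ∀ x : B, (∀ n, f n x = 0) → x = 0 := by
    intro x hx
    by_contra hx0
    have hpos : 0 < ‖x‖ := norm_pos_iff.mpr hx0
    obtain ⟨n, hn⟩ := Metric.denseRange_iff.mp hu x (‖x‖ / 2) (half_pos hpos)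
    have hdist : ‖x - u n‖ < ‖x‖ / 2 := by rwa [dist_eq_norm] at hn
    have hun : u n ≠ 0 := by
      intro h
      rw [h, sub_zero] at hdist
      linarith
    have h1 : ‖u n‖ = f n (u n) := (hf2 n hun).symm
    have h2 : f n (u n) = f n (u n - x) := by rw [map_sub, hx n, sub_zero]
    have h3 : f n (u n - x) ≤ ‖u n - x‖ := by
      calc f n (u n - x) ≤ ‖f n (u n - x)‖ := le_abs_self _
        _ ≤ ‖f n‖ * ‖u n - x‖ := (f n).le_opNorm _
        _ ≤ 1 * ‖u n - x‖ := by
            exact mul_le_mul_of_nonneg_right (hf1 n) (norm_nonneg _)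
        _ = ‖u n - x‖ := one_mul _
    have h4 : ‖u n - x‖ < ‖x‖ / 2 := by rwa [norm_sub_rev] at hdist
    have h5 : ‖x‖ / 2 < ‖u n‖ := by
      have := norm_sub_norm_le x (u n)
      linarith
    linarith [h1 ▸ h2 ▸ h3]
  -- pointwise bound
  have hpt : ∀ (x : B) (n : ℕ), ‖(1 / 2 : ℝ) ^ n * f n x‖ ≤ (1 / 2 : ℝ) ^ n * ‖x‖ := by
    intro x n
    rw [norm_mul]
    have h1 : ‖(1 / 2 : ℝ) ^ n‖ = (1 / 2 : ℝ) ^ n := by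
      rw [Real.norm_eq_abs, abs_of_nonneg (by positivity)]
    rw [h1]
    refine mul_le_mul_of_nonneg_left ?_ (by positivity)
    calc ‖f n x‖ ≤ ‖f n‖ * ‖x‖ := (f n).le_opNorm _
      _ ≤ 1 * ‖x‖ := mul_le_mul_of_nonneg_right (hf1 n) (norm_nonneg _)
      _ = ‖x‖ := one_mul _
  have hrpow : ∀ a : ℝ, a ^ ((2 : ENNReal).toReal) = a ^ (2 : ℕ) := by
    intro a
    rw [show ((2 : ENNReal).toReal) = ((2 : ℕ) : ℝ) by simp, Real.rpow_natCast]
  -- summable majorant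
  have hsumm : ∀ x : B, Summable fun n : ℕ => ((1 / 2 : ℝ) ^ n * ‖x‖) ^ (2 : ℕ) := by
    intro x
    have : (fun n : ℕ => ((1 / 2 : ℝ) ^ n * ‖x‖) ^ (2 : ℕ))
        = fun n : ℕ => ((1 / 4 : ℝ) ^ n) * (‖x‖ ^ (2 : ℕ)) := by
      funext n
      rw [mul_pow, ← pow_mul, show (1/4 : ℝ) = (1/2) ^ (2:ℕ) by norm_num, ← pow_mul,
        Nat.mul_comm]
    rw [this]
    exact (summable_geometric_of_lt_one (by norm_num) (by norm_num)).mul_right _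
  have hmem : ∀ x : B, Memℓp (fun n : ℕ => (1 / 2 : ℝ) ^ n * f n x) 2 := by
    intro x
    apply memℓp_gen
    simp only [hrpow]
    refine Summable.of_nonneg_of_le (fun n => by positivity) (fun n => ?_) (hsumm x)
    exact pow_le_pow_left₀ (norm_nonneg _) (hpt x n) 2
  -- the linear map into ℓ²
  let T₀ : B →ₗ[ℝ] lp (fun _ : ℕ => ℝ) 2 :=
    { toFun := fun x => ⟨fun n => (1 / 2 : ℝ) ^ n * f n x, hmem x⟩
      map_add' := by
        intro x y
        apply Subtype.ext
        funext n
        simp only [lp.coeFn_add, Pi.add_apply]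
        show (1 / 2 : ℝ) ^ n * f n (_ + _) = _
        rw [map_add, mul_add]
      map_smul' := by
        intro c x
        apply Subtype.ext
        funext n
        simp [lp.coeFn_smul, Pi.smul_apply, smul_eq_mul]
        ring }
  have hT₀coe : ∀ (x : B) (n : ℕ), (T₀ x : ℕ → ℝ) n = (1 / 2 : ℝ) ^ n * f n x :=
    fun x n => rfl
  -- norm bound
  have hbound : ∀ x : B, ‖T₀ x‖ ≤ 2 * ‖x‖ := by
    intro x
    have h2 : (0 : ℝ) < (2 : ENNReal).toReal := by norm_num
    refine le_of_pow_le_pow_left₀ (n := 2) (by norm_num) (by positivity) ?_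
    have hnorm := lp.norm_rpow_eq_tsum h2 (T₀ x)
    rw [hrpow] at hnorm
    simp only [hrpow] at hnorm
    rw [hnorm]
    have hle : (∑' n : ℕ, ‖(T₀ x : ℕ → ℝ) n‖ ^ (2:ℕ))
        ≤ ∑' n : ℕ, ((1 / 2 : ℝ) ^ n * ‖x‖) ^ (2 : ℕ) := by
      refine Summable.tsum_le_tsum (fun n => ?_) ?_ (hsumm x)
      · rw [hT₀coe]
        exact pow_le_pow_left₀ (norm_nonneg _) (hpt x n) 2
      · have := (hmem x).summable h2
        simp only [hrpow] at this
        exact this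
    refine hle.trans ?_
    have hgeom : (∑' n : ℕ, ((1 / 2 : ℝ) ^ n * ‖x‖) ^ (2 : ℕ))
        = (∑' n : ℕ, ((1 / 4 : ℝ) ^ n)) * ‖x‖ ^ (2 : ℕ) := by
      rw [← tsum_mul_right]
      congr 1
      funext n
      rw [mul_pow, ← pow_mul, show (1/4 : ℝ) = (1/2) ^ (2:ℕ) by norm_num, ← pow_mul,
        Nat.mul_comm]
    rw [hgeom, tsum_geometric_of_lt_one (by norm_num) (by norm_num)]
    have hx2 : (0:ℝ) ≤ ‖x‖ ^ (2:ℕ) := by positivity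
    nlinarith [hx2]
  let T : B →L[ℝ] lp (fun _ : ℕ => ℝ) 2 := T₀.mkContinuous 2 hbound
  have hTcoe : ∀ x : B, (T x : ℕ → ℝ) = fun n => (1 / 2 : ℝ) ^ n * f n x := fun x => rfl
  -- T is injective
  have hTinj : Function.Injective T := by
    intro x y hxy
    have hz : T (x - y) = 0 := by rw [map_sub, hxy, sub_self]
    have hz' : ∀ n : ℕ, (1 / 2 : ℝ) ^ n * f n (x - y) = 0 := by
      intro n
      have hc : (fun n : ℕ => (1 / 2 : ℝ) ^ n * f n (x - y))
          = ((0 : lp (fun _ : ℕ => ℝ) 2) : ℕ → ℝ) := by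
        rw [← hTcoe, hz]
      have := congrFun hc n
      simpa using this
    have hz'' : ∀ n : ℕ, f n (x - y) = 0 := by
      intro n
      rcases mul_eq_zero.mp (hz' n) with h | h
      · exact absurd h (by positivity)
      · exact h
    have := hsep _ hz''
    rwa [sub_eq_zero] at this
  -- the closure of the range
  let S : Submodule ℝ (lp (fun _ : ℕ => ℝ) 2) :=
    (LinearMap.range (T : B →ₗ[ℝ] lp (fun _ : ℕ => ℝ) 2)).topologicalClosure
  have hmemS : ∀ x : B, T x ∈ S :=
    fun x => Submodule.le_topologicalClosure _ (LinearMap.mem_range_self _ x)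
  let j : B →L[ℝ] S := T.codRestrict S hmemS
  have hScoe : (S : Set (lp (fun _ : ℕ => ℝ) 2)) = closure (Set.range T) := by
    rw [Submodule.topologicalClosure_coe]
    congr 1
  refine ⟨S, inferInstance, inferInstance, ?_, ?_, j, ?_, ?_⟩
  · -- complete
    have : IsClosed (S : Set (lp (fun _ : ℕ => ℝ) 2)) :=
      Submodule.isClosed_topologicalClosure _
    exact this.completeSpace_coe
  · -- separable: follows from dense range of j (proved below); prove directly
    have hdr : DenseRange j := by
      intro z
      rw [closure_subtype]
      have himg : Subtype.val '' Set.range j = Set.range (T : B → lp (fun _ : ℕ => ℝ) 2) := by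
        rw [← Set.range_comp]
        rfl
      rw [himg]
      have := z.2
      rw [← SetLike.mem_coe, hScoe] at this
      exact this
    exact hdr.separableSpace j.continuous
  · -- injective
    intro x y hxy
    exact hTinj (Subtype.ext_iff.mp hxy)
  · -- dense range
    intro z
    rw [closure_subtype]
    have himg : Subtype.val '' Set.range j = Set.range (T : B → lp (fun _ : ℕ => ℝ) 2) := by
      rw [← Set.range_comp]
      rfl
    rw [himg]
    have := z.2
    rw [← SetLike.mem_coe, hScoe] at this
    exact this
end

section
/- With 1 ≤ q < ∞, under the stated hypotheses on (𝓔_k) and (t_k), every f ∈ L^q(μ) satisfies the Kuelbs–Steadman K² bound (∑_{k=1}^∞ t_k |∫_X 𝓔_k f dμ|²)^{1/2} ≤ ‖f‖_{L^q(μ)}. In particular L^q(μ) embeds continuously into the K² space (Theorem 2.5). -/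
open MeasureTheory

private lemma rpow_le_self_aux {x p : ℝ} (hx0 : 0 ≤ x) (hx1 : x ≤ 1) (hp : 1 ≤ p) :
    x ^ p ≤ x := by
  rcases eq_or_lt_of_le hx0 with h | h
  · rw [← h, Real.zero_rpow (by linarith)]
  · calc x ^ p ≤ x ^ (1 : ℝ) := Real.rpow_le_rpow_of_exponent_ge h hx1 hp
    _ = x := Real.rpow_one x

/-- **Theorem 2.5.** Under the Kuelbs–Steadman hypotheses on `(𝓔ₖ)` and `(tₖ)`,
every `f ∈ L^q(μ)` (`1 ≤ q < ∞`) satisfies the `K²` bound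
`(∑ₖ tₖ |∫ 𝓔ₖ f dμ|²)^{1/2} ≤ ‖f‖_{L^q(μ)}`; in particular `L^q(μ)` embeds
continuously into the Kuelbs–Steadman space `K²`. -/
theorem Lq_subset_K2 {X : Type*} [MeasurableSpace X] (μ : Measure X)
    (E : ℕ → X → ℝ) (hEmeas : ∀ k, Measurable (E k))
    (hE0 : ∀ k x, 0 ≤ E k x) (hE1 : ∀ k x, E k x ≤ 1)
    (hEint : ∀ k, Integrable (E k) μ)
    (hEle : ∀ k, ∫ x, E k x ∂μ ≤ 1)
    (t : ℕ → ℝ) (ht0 : ∀ k, 0 ≤ t k) (htsum : ∑' k, t k = 1)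
    (q : ℝ) (hq : 1 ≤ q)
    (f : X → ℝ) (hf : MemLp f (ENNReal.ofReal q) μ) :
    (∑' k, t k * |∫ x, E k x * f x ∂μ| ^ (2 : ℝ)) ^ ((1 : ℝ) / 2)
      ≤ (eLpNorm f (ENNReal.ofReal q) μ).toReal := by
  set M : ℝ := (eLpNorm f (ENNReal.ofReal q) μ).toReal with hM
  have hM0 : 0 ≤ M := ENNReal.toReal_nonneg
  have hq0 : (0:ℝ) < q := by linarith
  -- key bound: |∫ E k f| ≤ M
  have key : ∀ k, |∫ x, E k x * f x ∂μ| ≤ M := by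
    intro k
    have habs : |∫ x, E k x * f x ∂μ| ≤ ∫ x, ‖E k x‖ * ‖f x‖ ∂μ := by
      calc |∫ x, E k x * f x ∂μ| ≤ ∫ x, ‖E k x * f x‖ ∂μ := by
            simpa using norm_integral_le_integral_norm (μ := μ) (f := fun x => E k x * f x)
        _ = ∫ x, ‖E k x‖ * ‖f x‖ ∂μ := by simp [norm_mul]
    rcases eq_or_lt_of_le hq with h1 | h1
    · -- q = 1
      have hfi : Integrable f μ := by
        rw [← memLp_one_iff_integrable]
        simpa [← h1] using hf
      have h2 : ∫ x, ‖E k x‖ * ‖f x‖ ∂μ ≤ ∫ x, ‖f x‖ ∂μ := by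
        refine integral_mono (hfi.norm.mono' ?_ ?_) hfi.norm ?_
        · exact (hEmeas k).aestronglyMeasurable.norm.mul hf.aestronglyMeasurable.norm
        · refine Filter.Eventually.of_forall fun x => ?_
          have h1 : ‖E k x‖ ≤ 1 := by
            rw [Real.norm_of_nonneg (hE0 k x)]; exact hE1 k x
          rw [Real.norm_of_nonneg (mul_nonneg (norm_nonneg _) (norm_nonneg _))]
          calc ‖E k x‖ * ‖f x‖ ≤ 1 * ‖f x‖ :=
                mul_le_mul_of_nonneg_right h1 (norm_nonneg _)
            _ = ‖f x‖ := one_mul _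
        · intro x
          have : ‖E k x‖ ≤ 1 := by
            rw [Real.norm_of_nonneg (hE0 k x)]; exact hE1 k x
          calc ‖E k x‖ * ‖f x‖ ≤ 1 * ‖f x‖ :=
                mul_le_mul_of_nonneg_right this (norm_nonneg _)
            _ = ‖f x‖ := one_mul _
      have hMeq : M = ∫ x, ‖f x‖ ∂μ := by
        rw [hM, hf.eLpNorm_eq_integral_rpow_norm (by simp [hq0]) (by simp)]
        rw [ENNReal.toReal_ofReal hq0.le, ← h1]
        simp only [Real.rpow_one, inv_one]
        rw [ENNReal.toReal_ofReal (integral_nonneg fun x => norm_nonneg _)]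
      rw [hMeq]
      exact le_trans habs h2
    · -- q > 1 : Hölder
      set p : ℝ := q.conjExponent with hp
      have hpq : p.HolderConjugate q := (Real.HolderConjugate.conjExponent h1).symm
      have hEp : MemLp (E k) (ENNReal.ofReal p) μ := by
        refine ⟨(hEmeas k).aestronglyMeasurable, ?_⟩
        rw [eLpNorm_eq_lintegral_rpow_enorm_toReal (by simp [hpq.pos]) (by simp)]
        rw [ENNReal.toReal_ofReal hpq.nonneg]
        have hle : ∫⁻ x, (‖E k x‖₊ : ENNReal) ^ p ∂μ ≤ ∫⁻ x, (‖E k x‖₊ : ENNReal) ∂μ := by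
          refine lintegral_mono fun x => ?_
          calc (‖E k x‖₊ : ENNReal) ^ p ≤ (‖E k x‖₊ : ENNReal) ^ (1:ℝ) := by
                refine ENNReal.rpow_le_rpow_of_exponent_ge ?_ hpq.lt.le
                simp only [ENNReal.coe_le_one_iff]
                rw [← NNReal.coe_le_coe, coe_nnnorm, Real.norm_of_nonneg (hE0 k x)]
                exact hE1 k x
            _ = _ := ENNReal.rpow_one _
        have hfin : ∫⁻ x, (‖E k x‖₊ : ENNReal) ∂μ < ⊤ := (hEint k).2
        exact ENNReal.rpow_lt_top_of_nonneg (by have h := hpq.pos; positivity) (lt_of_le_of_lt hle hfin).ne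
      have hHolder := integral_mul_norm_le_Lp_mul_Lq hpq hEp hf
      -- bound the E-factor by 1
      have hEpint : Integrable (fun x => ‖E k x‖ ^ p) μ := by
        refine (hEint k).mono ?_ ?_
        · exact (((hEmeas k).norm).pow_const p).aestronglyMeasurable
        · refine Filter.Eventually.of_forall fun x => ?_
          rw [Real.norm_of_nonneg (Real.rpow_nonneg (norm_nonneg _) p)]
          rw [Real.norm_of_nonneg (hE0 k x)]
          exact rpow_le_self_aux (hE0 k x) (hE1 k x) hpq.lt.le
      have hE_int_le : ∫ x, ‖E k x‖ ^ p ∂μ ≤ 1 := by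
        calc ∫ x, ‖E k x‖ ^ p ∂μ ≤ ∫ x, E k x ∂μ := by
              refine integral_mono hEpint (hEint k) fun x => ?_
              rw [Real.norm_of_nonneg (hE0 k x)]
              exact rpow_le_self_aux (hE0 k x) (hE1 k x) hpq.lt.le
          _ ≤ 1 := hEle k
      have hE_fac : (∫ x, ‖E k x‖ ^ p ∂μ) ^ (1 / p) ≤ 1 := by
        refine Real.rpow_le_one ?_ hE_int_le (one_div_nonneg.mpr hpq.nonneg)
        exact integral_nonneg fun x => Real.rpow_nonneg (norm_nonneg _) p
      have hf_fac : (∫ x, ‖f x‖ ^ q ∂μ) ^ (1 / q) = M := by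
        rw [hM, hf.eLpNorm_eq_integral_rpow_norm (by simp [hq0]) (by simp)]
        rw [ENNReal.toReal_ofReal hq0.le]
        rw [ENNReal.toReal_ofReal (Real.rpow_nonneg
          (integral_nonneg fun x => Real.rpow_nonneg (norm_nonneg _) q) _)]
        rw [one_div]
      have hfq_nonneg : (0:ℝ) ≤ (∫ x, ‖f x‖ ^ q ∂μ) ^ (1 / q) :=
        Real.rpow_nonneg (integral_nonneg fun x => Real.rpow_nonneg (norm_nonneg _) q) _
      calc |∫ x, E k x * f x ∂μ| ≤ ∫ x, ‖E k x‖ * ‖f x‖ ∂μ := habs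
        _ ≤ (∫ x, ‖E k x‖ ^ p ∂μ) ^ (1 / p) * (∫ x, ‖f x‖ ^ q ∂μ) ^ (1 / q) := hHolder
        _ ≤ 1 * (∫ x, ‖f x‖ ^ q ∂μ) ^ (1 / q) :=
            mul_le_mul_of_nonneg_right hE_fac hfq_nonneg
        _ = M := by rw [one_mul, hf_fac]
  -- summation step
  have hsumt : Summable t := by
    by_contra h
    rw [tsum_eq_zero_of_not_summable h] at htsum
    norm_num at htsum
  have hterm : ∀ k, t k * |∫ x, E k x * f x ∂μ| ^ (2:ℝ) ≤ t k * M ^ (2:ℝ) := by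
    intro k
    exact mul_le_mul_of_nonneg_left
      (Real.rpow_le_rpow (abs_nonneg _) (key k) (by norm_num)) (ht0 k)
  have hsum2 : Summable (fun k => t k * M ^ (2:ℝ)) := hsumt.mul_right _
  have hsum1 : Summable (fun k => t k * |∫ x, E k x * f x ∂μ| ^ (2:ℝ)) := by
    refine Summable.of_nonneg_of_le (fun k => ?_) hterm hsum2
    exact mul_nonneg (ht0 k) (Real.rpow_nonneg (abs_nonneg _) _)
  have htsum_le : (∑' k, t k * |∫ x, E k x * f x ∂μ| ^ (2:ℝ)) ≤ M ^ (2:ℝ) := by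
    calc (∑' k, t k * |∫ x, E k x * f x ∂μ| ^ (2:ℝ)) ≤ ∑' k, t k * M ^ (2:ℝ) :=
          Summable.tsum_le_tsum hterm hsum1 hsum2
      _ = (∑' k, t k) * M ^ (2:ℝ) := tsum_mul_right
      _ = M ^ (2:ℝ) := by rw [htsum, one_mul]
  have htsum_nonneg : 0 ≤ ∑' k, t k * |∫ x, E k x * f x ∂μ| ^ (2:ℝ) :=
    tsum_nonneg fun k => mul_nonneg (ht0 k) (Real.rpow_nonneg (abs_nonneg _) _)
  calc (∑' k, t k * |∫ x, E k x * f x ∂μ| ^ (2:ℝ)) ^ ((1:ℝ)/2)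
      ≤ (M ^ (2:ℝ)) ^ ((1:ℝ)/2) := Real.rpow_le_rpow htsum_nonneg htsum_le (by norm_num)
    _ = M := by
        rw [← Real.rpow_mul hM0]
        norm_num
end

section
/- With 1 ≤ p < ∞ and 1 ≤ q < ∞, under the stated hypotheses on (𝓔_k) and (t_k), every f ∈ L^q(μ) satisfies ‖f‖_{K^p} = (∑_{k=1}^∞ t_k |∫_X 𝓔_k f dμ|^p)^{1/p} ≤ ‖f‖_{L^q(μ)}. In particular every L^q space embeds continuously (with norm of the embedding at most 1) into the K^p space (Theorem 2.7). -/
open MeasureTheory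

/-- Auxiliary: a measurable function with values in `[0,1]`, integrable with integral `≤ 1`,
is in `L^r` for every `r ≥ 1`, and `∫ g^r ≤ 1`. -/
lemma aux_memLp {X : Type*} [MeasurableSpace X] (μ : Measure X) (g : X → ℝ)
    (hmeas : Measurable g) (h0 : ∀ x, 0 ≤ g x) (h1 : ∀ x, g x ≤ 1)
    (hint : Integrable g μ) (hle : ∫ x, g x ∂μ ≤ 1) (r : ℝ) (hr : 1 ≤ r) :
    MemLp g (ENNReal.ofReal r) μ ∧ ∫ x, g x ^ r ∂μ ≤ 1 := by
  have hr0 : 0 < r := lt_of_lt_of_le one_pos hr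
  have hpt : ∀ x, g x ^ r ≤ g x := by
    intro x
    rcases eq_or_lt_of_le (h0 x) with h | h
    · rw [← h, Real.zero_rpow hr0.ne']
    · calc g x ^ r ≤ g x ^ (1 : ℝ) :=
            Real.rpow_le_rpow_of_exponent_ge h (h1 x) hr
        _ = g x := Real.rpow_one _
  have hintr : Integrable (fun x => g x ^ r) μ := by
    refine hint.mono' ((hmeas.pow_const r).aestronglyMeasurable) ?_
    refine Filter.Eventually.of_forall fun x => ?_
    rw [Real.norm_of_nonneg (Real.rpow_nonneg (h0 x) r)]
    exact hpt x
  constructor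
  · refine ⟨hmeas.aestronglyMeasurable, ?_⟩
    have hne0 : ENNReal.ofReal r ≠ 0 := by
      simp [ENNReal.ofReal_eq_zero, not_le, hr0]
    rw [eLpNorm_eq_lintegral_rpow_enorm_toReal hne0 ENNReal.ofReal_ne_top]
    have hlint : ∫⁻ x, (‖g x‖₊ : ENNReal) ^ (ENNReal.ofReal r).toReal ∂μ
        ≤ ∫⁻ x, (‖g x‖₊ : ENNReal) ∂μ := by
      refine lintegral_mono fun x => ?_
      rw [ENNReal.toReal_ofReal hr0.le]
      have hx1 : (‖g x‖₊ : ENNReal) ≤ 1 := by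
        rw [← ENNReal.coe_one, ENNReal.coe_le_coe, ← NNReal.coe_le_coe]
        simp [Real.norm_of_nonneg (h0 x), abs_of_nonneg (h0 x), h1 x]
      calc (‖g x‖₊ : ENNReal) ^ r ≤ (‖g x‖₊ : ENNReal) ^ (1 : ℝ) :=
            ENNReal.rpow_le_rpow_of_exponent_ge hx1 hr
        _ = _ := ENNReal.rpow_one _
    have hfin : ∫⁻ x, (‖g x‖₊ : ENNReal) ∂μ < ⊤ := hint.2
    exact ENNReal.rpow_lt_top_of_nonneg (by positivity) (lt_of_le_of_lt hlint hfin).ne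
  · calc ∫ x, g x ^ r ∂μ ≤ ∫ x, g x ∂μ := integral_mono hintr hint hpt
      _ ≤ 1 := hle

/-- **Theorem 2.7.** Under the Kuelbs–Steadman hypotheses on `(𝓔ₖ)` and `(tₖ)`,
for `1 ≤ p < ∞` and `1 ≤ q < ∞`, every `f ∈ L^q(μ)` satisfies
`‖f‖_{K^p} = (∑ₖ tₖ |∫ 𝓔ₖ f dμ|^p)^{1/p} ≤ ‖f‖_{L^q(μ)}`; in particular every
`L^q` space embeds continuously (with embedding norm at most 1) into `K^p`. -/
theorem Lq_subset_Kp {X : Type*} [MeasurableSpace X] (μ : Measure X)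
    (E : ℕ → X → ℝ) (hEmeas : ∀ k, Measurable (E k))
    (hE0 : ∀ k x, 0 ≤ E k x) (hE1 : ∀ k x, E k x ≤ 1)
    (hEint : ∀ k, Integrable (E k) μ)
    (hEle : ∀ k, ∫ x, E k x ∂μ ≤ 1)
    (t : ℕ → ℝ) (ht0 : ∀ k, 0 ≤ t k) (htsum : ∑' k, t k = 1)
    (p q : ℝ) (hp : 1 ≤ p) (hq : 1 ≤ q)
    (f : X → ℝ) (hf : MemLp f (ENNReal.ofReal q) μ) :
    (∑' k, t k * |∫ x, E k x * f x ∂μ| ^ p) ^ ((1 : ℝ) / p)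
      ≤ (eLpNorm f (ENNReal.ofReal q) μ).toReal := by
  have hq0 : 0 < q := lt_of_lt_of_le one_pos hq
  have hp0 : 0 < p := lt_of_lt_of_le one_pos hp
  set C : ℝ := (eLpNorm f (ENNReal.ofReal q) μ).toReal with hC
  have hC0 : 0 ≤ C := ENNReal.toReal_nonneg
  -- the key pointwise bound
  have hkey : ∀ k, |∫ x, E k x * f x ∂μ| ≤ C := by
    intro k
    have hEfmeas : AEStronglyMeasurable (fun x => E k x * f x) μ :=
      (hEmeas k).aestronglyMeasurable.mul hf.1
    rcases eq_or_lt_of_le hq with hq1 | hq1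
    · -- case q = 1
      have hfi : Integrable f μ := by
        rw [← memLp_one_iff_integrable]
        simpa [← hq1, ENNReal.ofReal_one] using hf
      have hEfi : Integrable (fun x => E k x * f x) μ := by
        refine hfi.norm.mono' hEfmeas ?_
        refine Filter.Eventually.of_forall fun x => ?_
        rw [Real.norm_eq_abs, Real.norm_eq_abs, abs_mul, abs_of_nonneg (hE0 k x)]
        calc E k x * |f x| ≤ 1 * |f x| :=
              mul_le_mul_of_nonneg_right (hE1 k x) (abs_nonneg _)
          _ = |f x| := one_mul _
      have h1 : |∫ x, E k x * f x ∂μ| ≤ ∫ x, |E k x| * |f x| ∂μ := by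
        simpa [Real.norm_eq_abs] using norm_integral_le_integral_norm (μ := μ) (fun x => E k x * f x)
      have h2 : ∫ x, |E k x| * |f x| ∂μ ≤ ∫ x, |f x| ∂μ := by
        have hEfi' : Integrable (fun x => |E k x| * |f x|) μ := by
          simpa [abs_mul] using hEfi.abs
        refine integral_mono hEfi' hfi.abs fun x => ?_
        rw [abs_of_nonneg (hE0 k x)]
        calc E k x * |f x| ≤ 1 * |f x| :=
              mul_le_mul_of_nonneg_right (hE1 k x) (abs_nonneg _)
          _ = |f x| := one_mul _
      have hCeq : C = ∫ x, |f x| ∂μ := by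
        rw [hC, hf.eLpNorm_eq_integral_rpow_norm (by simp [ENNReal.ofReal_eq_zero, not_le, hq0])
          ENNReal.ofReal_ne_top]
        rw [ENNReal.toReal_ofReal (by positivity)]
        simp [← hq1, Real.norm_eq_abs]
      rw [hCeq]
      exact le_trans h1 h2
    · -- case 1 < q
      have hqr : q.HolderConjugate (Real.conjExponent q) :=
        Real.HolderConjugate.conjExponent hq1
      set r : ℝ := Real.conjExponent q with hrdef
      have hrq : r.HolderConjugate q := hqr.symm
      have hr1 : 1 ≤ r := hrq.lt.le
      obtain ⟨hEr, hEintr⟩ := aux_memLp μ (E k) (hEmeas k) (hE0 k) (hE1 k) (hEint k) (hEle k) r hr1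
      have hHolder := integral_mul_norm_le_Lp_mul_Lq hrq hEr hf
      have h1 : |∫ x, E k x * f x ∂μ| ≤ ∫ x, ‖E k x‖ * ‖f x‖ ∂μ := by
        simpa [Real.norm_eq_abs] using
          norm_integral_le_integral_norm (μ := μ) (fun x => E k x * f x)
      have hfac1 : (∫ x, ‖E k x‖ ^ r ∂μ) ^ ((1:ℝ) / r) ≤ 1 := by
        have heq : ∫ x, ‖E k x‖ ^ r ∂μ = ∫ x, E k x ^ r ∂μ := by
          congr 1; ext x; rw [Real.norm_of_nonneg (hE0 k x)]
        have hnn : 0 ≤ ∫ x, ‖E k x‖ ^ r ∂μ := by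
          refine integral_nonneg fun x => Real.rpow_nonneg (norm_nonneg _) r
        refine Real.rpow_le_one hnn ?_ (by positivity)
        rw [heq]; exact hEintr
      have hfac2 : (∫ x, ‖f x‖ ^ q ∂μ) ^ ((1:ℝ) / q) = C := by
        rw [hC, hf.eLpNorm_eq_integral_rpow_norm (by simp [ENNReal.ofReal_eq_zero, not_le, hq0])
          ENNReal.ofReal_ne_top]
        rw [ENNReal.toReal_ofReal (by positivity)]
        rw [ENNReal.toReal_ofReal hq0.le, one_div]
      calc |∫ x, E k x * f x ∂μ| ≤ ∫ x, ‖E k x‖ * ‖f x‖ ∂μ := h1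
        _ ≤ (∫ x, ‖E k x‖ ^ r ∂μ) ^ ((1:ℝ) / r) * (∫ x, ‖f x‖ ^ q ∂μ) ^ ((1:ℝ) / q) := hHolder
        _ = (∫ x, ‖E k x‖ ^ r ∂μ) ^ ((1:ℝ) / r) * C := by rw [hfac2]
        _ ≤ 1 * C := mul_le_mul_of_nonneg_right hfac1 hC0
        _ = C := one_mul C
  -- summability of `t`
  have htsummable : Summable t := by
    by_contra h
    rw [tsum_eq_zero_of_not_summable h] at htsum
    norm_num at htsum
  have hterm : ∀ k, t k * |∫ x, E k x * f x ∂μ| ^ p ≤ t k * C ^ p := by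
    intro k
    exact mul_le_mul_of_nonneg_left
      (Real.rpow_le_rpow (abs_nonneg _) (hkey k) hp0.le) (ht0 k)
  have hrhs : Summable (fun k => t k * C ^ p) := htsummable.mul_right _
  have hlhs : Summable (fun k => t k * |∫ x, E k x * f x ∂μ| ^ p) :=
    Summable.of_nonneg_of_le
      (fun k => mul_nonneg (ht0 k) (Real.rpow_nonneg (abs_nonneg _) p)) hterm hrhs
  have hsum : (∑' k, t k * |∫ x, E k x * f x ∂μ| ^ p) ≤ C ^ p := by
    calc (∑' k, t k * |∫ x, E k x * f x ∂μ| ^ p) ≤ ∑' k, t k * C ^ p :=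
          Summable.tsum_le_tsum hterm hlhs hrhs
      _ = (∑' k, t k) * C ^ p := tsum_mul_right
      _ = C ^ p := by rw [htsum, one_mul]
  calc (∑' k, t k * |∫ x, E k x * f x ∂μ| ^ p) ^ ((1 : ℝ) / p)
      ≤ (C ^ p) ^ ((1 : ℝ) / p) := by
        refine Real.rpow_le_rpow ?_ hsum (by positivity)
        exact tsum_nonneg fun k => mul_nonneg (ht0 k) (Real.rpow_nonneg (abs_nonneg _) p)
    _ = C := by
        rw [← Real.rpow_mul hC0, mul_one_div, div_self hp0.ne', Real.rpow_one]
end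

section
/- The smooth compactly supported functions are dense in K^p for 1 ≤ p < ∞: let μ be Lebesgue measure on ℝⁿ. For every integrable f : ℝⁿ → ℝ and every ε > 0 there exists an infinitely differentiable function g : ℝⁿ → ℝ with compact support such that ‖f − g‖_{K^p} = (∑_{k=1}^∞ t_k |∫_{ℝⁿ} 𝓔_k (f − g) dμ|^p)^{1/p} < ε (Theorem 2.14 and Corollary 2.15). -/
section Aux
open MeasureTheory Metric Set Function
open scoped Convolution Topology Pointwise

/-- Smooth compactly supported approximation in L¹ on `Fin n → ℝ`. -/
theorem exists_smooth_L1_approx (n : ℕ) (f : (Fin n → ℝ) → ℝ)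
    (hf : Integrable f volume) {δ : ℝ} (hδ : 0 < δ) :
    ∃ g : (Fin n → ℝ) → ℝ, ContDiff ℝ (⊤ : ℕ∞) g ∧ HasCompactSupport g ∧
      Integrable g volume ∧ (∫ x, ‖f x - g x‖) ≤ δ := by
  obtain ⟨g₀, hg₀supp, hg₀close, hg₀cont, hg₀int⟩ :=
    hf.exists_hasCompactSupport_integral_sub_le (half_pos hδ)
  set K : Set (Fin n → ℝ) := tsupport g₀ with hK
  have hKc : IsCompact K := hg₀supp
  set D : Set (Fin n → ℝ) := cthickening 1 K with hD
  have hDc : IsCompact D := hKc.cthickening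
  have hDfin : volume D < ⊤ := hDc.measure_lt_top
  set M : ℝ := (volume D).toReal + 1 with hM
  have hM0 : 0 < M := by positivity
  set η : ℝ := δ / (2 * M) with hη
  have hη0 : 0 < η := by positivity
  -- uniform continuity of g₀
  have hUC : UniformContinuous g₀ := hg₀supp.uniformContinuous_of_continuous hg₀cont
  obtain ⟨r, hr0, hr⟩ := Metric.uniformContinuous_iff.mp hUC η hη0
  set r' : ℝ := min r 1 with hr'
  have hr'0 : 0 < r' := lt_min hr0 one_pos
  set φ : ContDiffBump (0 : Fin n → ℝ) := ⟨r' / 2, r', by positivity, by linarith⟩ with hφ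
  set g : (Fin n → ℝ) → ℝ := φ.normed volume ⋆[ContinuousLinearMap.lsmul ℝ ℝ, volume] g₀ with hg
  have hgsmooth : ContDiff ℝ (⊤ : ℕ∞) g :=
    (φ.hasCompactSupport_normed).contDiff_convolution_left _ φ.contDiff_normed
      hg₀int.locallyIntegrable
  have hgsupp : HasCompactSupport g :=
    (φ.hasCompactSupport_normed).convolution _ hg₀supp
  have hgint : Integrable g volume := hgsmooth.continuous.integrable_of_hasCompactSupport hgsupp
  -- pointwise bound
  have hnear : ∀ x₀, dist (g x₀) (g₀ x₀) ≤ η := by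
    intro x₀
    refine ContDiffBump.dist_normed_convolution_le hg₀int.aestronglyMeasurable ?_
    intro x hx
    have : dist x x₀ < r := lt_of_lt_of_le (mem_ball.mp hx) (min_le_left _ _)
    exact (hr this).le
  -- support of g₀ - g inside D
  have hsub : ∀ x, x ∉ D → g₀ x - g x = 0 := by
    intro x hx
    have hxK : x ∉ K := fun h => hx (self_subset_cthickening K h)
    have h1 : g₀ x = 0 := image_eq_zero_of_notMem_tsupport hxK
    have h2 : g x = 0 := by
      by_contra h
      have hss : support g ⊆ support (φ.normed volume) + support g₀ :=
        support_convolution_subset (ContinuousLinearMap.lsmul ℝ ℝ) (μ := volume)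
          (f := φ.normed volume) (g := g₀)
      obtain ⟨a, ha, b, hb, rfl⟩ := hss (mem_support.mpr h)
      have hna : ‖a‖ < r' := by
        have h3 : a ∈ ball (0 : Fin n → ℝ) φ.rOut := φ.support_normed_eq (μ := volume) ▸ ha
        simpa [mem_ball, dist_zero_right, hφ] using h3
      apply hx
      have hbK : b ∈ K := subset_tsupport _ hb
      have hd : dist (a + b) b ≤ 1 := by
        rw [dist_eq_norm]
        simpa using le_of_lt (lt_of_lt_of_le hna (min_le_right _ _))
      exact mem_cthickening_of_dist_le _ b 1 K hbK hd
    rw [h1, h2, sub_zero]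
  -- integral bound for ‖g₀ - g‖
  have hDmeas : MeasurableSet D := hDc.isClosed.measurableSet
  have hint_ind : Integrable (D.indicator fun _ => η) volume := by
    refine (integrable_indicator_iff hDmeas).mpr ?_
    exact integrableOn_const hDfin.ne
  have hbound : (∫ x, ‖g₀ x - g x‖) ≤ δ / 2 := by
    have h1 : (∫ x, ‖g₀ x - g x‖) ≤ ∫ x, D.indicator (fun _ => η) x := by
      refine integral_mono_of_nonneg (Filter.Eventually.of_forall fun x => norm_nonneg _)
        hint_ind (Filter.Eventually.of_forall fun x => ?_)
      by_cases hx : x ∈ D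
      · simp only [indicator_of_mem hx]
        have := hnear x
        rw [dist_eq_norm] at this
        simpa [norm_sub_rev] using this
      · simp [indicator_of_notMem hx, hsub x hx]
    have h2 : (∫ x, D.indicator (fun _ => η) x) = (volume D).toReal * η := by
      rw [integral_indicator_const _ hDmeas]; simp [mul_comm, measureReal_def]
    calc (∫ x, ‖g₀ x - g x‖) ≤ (volume D).toReal * η := by rw [← h2]; exact h1
      _ ≤ M * η := by
          apply mul_le_mul_of_nonneg_right _ hη0.le
          simp [hM]
      _ = δ / 2 := by field_simp [hη]; rw [hη]; field_simp
  refine ⟨g, hgsmooth, hgsupp, hgint, ?_⟩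
  have htri : (∫ x, ‖f x - g x‖) ≤ (∫ x, ‖f x - g₀ x‖) + ∫ x, ‖g₀ x - g x‖ := by
    have hA : Integrable (fun x => ‖f x - g₀ x‖) volume := by
      simpa [Pi.sub_apply] using (hf.sub hg₀int).norm
    have hB : Integrable (fun x => ‖g₀ x - g x‖) volume := by
      simpa [Pi.sub_apply] using (hg₀int.sub hgint).norm
    rw [← integral_add hA hB]
    refine integral_mono_of_nonneg (Filter.Eventually.of_forall fun x => norm_nonneg _)
      (hA.add hB)
      (Filter.Eventually.of_forall fun x => ?_)
    calc ‖f x - g x‖ = ‖(f x - g₀ x) + (g₀ x - g x)‖ := by ring_nf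
      _ ≤ ‖f x - g₀ x‖ + ‖g₀ x - g x‖ := norm_add_le _ _
  linarith

end Aux

open MeasureTheory

/-- **Theorem 2.14 / Corollary 2.15.** The smooth compactly supported functions
are dense in `K^p` for `1 ≤ p < ∞`: with `μ` Lebesgue measure on `ℝⁿ`, for
every integrable `f : ℝⁿ → ℝ` and every `ε > 0` there is a `C^∞` compactly
supported `g : ℝⁿ → ℝ` with
`‖f − g‖_{K^p} = (∑ₖ tₖ |∫ 𝓔ₖ (f − g) dμ|^p)^{1/p} < ε`. -/
theorem smooth_Cc_dense_in_Kp (n : ℕ)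
    (E : ℕ → (Fin n → ℝ) → ℝ) (hEmeas : ∀ k, Measurable (E k))
    (hE1 : ∀ k x, |E k x| ≤ 1)
    (t : ℕ → ℝ) (ht0 : ∀ k, 0 ≤ t k) (htsum : ∑' k, t k = 1)
    (p : ℝ) (hp : 1 ≤ p)
    (f : (Fin n → ℝ) → ℝ) (hf : Integrable f volume)
    (ε : ℝ) (hε : 0 < ε) :
    ∃ g : (Fin n → ℝ) → ℝ, ContDiff ℝ (⊤ : ℕ∞) g ∧ HasCompactSupport g ∧
      (∑' k, t k * |∫ x, E k x * (f x - g x)| ^ p) ^ ((1 : ℝ) / p) < ε := by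
  have hp0 : (0 : ℝ) < p := lt_of_lt_of_le one_pos hp
  have hsummable : Summable t := by
    by_contra h
    rw [tsum_eq_zero_of_not_summable h] at htsum
    norm_num at htsum
  obtain ⟨g, hgs, hgc, hgi, hgclose⟩ := exists_smooth_L1_approx n f hf (half_pos hε)
  refine ⟨g, hgs, hgc, ?_⟩
  have hA : Integrable (fun x => ‖f x - g x‖) volume := by
    simpa [Pi.sub_apply] using (hf.sub hgi).norm
  have hI : ∀ k, |∫ x, E k x * (f x - g x)| ≤ ε / 2 := by
    intro k
    calc |∫ x, E k x * (f x - g x)| ≤ ∫ x, ‖E k x * (f x - g x)‖ := by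
          simpa using norm_integral_le_integral_norm (fun x => E k x * (f x - g x))
      _ ≤ ∫ x, ‖f x - g x‖ := by
          refine integral_mono_of_nonneg (Filter.Eventually.of_forall fun x => norm_nonneg _)
            hA (Filter.Eventually.of_forall fun x => ?_)
          show ‖E k x * (f x - g x)‖ ≤ ‖f x - g x‖
          rw [norm_mul]
          calc ‖E k x‖ * ‖f x - g x‖ ≤ 1 * ‖f x - g x‖ :=
                mul_le_mul_of_nonneg_right (by simpa using hE1 k x) (norm_nonneg _)
            _ = ‖f x - g x‖ := one_mul _
      _ ≤ ε / 2 := hgclose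
  have hterm : ∀ k, t k * |∫ x, E k x * (f x - g x)| ^ p ≤ t k * (ε / 2) ^ p := fun k =>
    mul_le_mul_of_nonneg_left (Real.rpow_le_rpow (abs_nonneg _) (hI k) hp0.le) (ht0 k)
  have hsum2 : Summable (fun k => t k * (ε / 2) ^ p) := hsummable.mul_right _
  have hsum1 : Summable (fun k => t k * |∫ x, E k x * (f x - g x)| ^ p) :=
    hsum2.of_nonneg_of_le
      (fun k => mul_nonneg (ht0 k) (Real.rpow_nonneg (abs_nonneg _) _)) hterm
  have hle : (∑' k, t k * |∫ x, E k x * (f x - g x)| ^ p) ≤ (ε / 2) ^ p := by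
    calc (∑' k, t k * |∫ x, E k x * (f x - g x)| ^ p) ≤ ∑' k, t k * (ε / 2) ^ p :=
          Summable.tsum_le_tsum hterm hsum1 hsum2
      _ = (ε / 2) ^ p := by rw [tsum_mul_right, htsum, one_mul]
  have hS0 : (0 : ℝ) ≤ ∑' k, t k * |∫ x, E k x * (f x - g x)| ^ p :=
    tsum_nonneg fun k => mul_nonneg (ht0 k) (Real.rpow_nonneg (abs_nonneg _) _)
  calc (∑' k, t k * |∫ x, E k x * (f x - g x)| ^ p) ^ ((1 : ℝ) / p)
      ≤ ((ε / 2) ^ p) ^ ((1 : ℝ) / p) := Real.rpow_le_rpow hS0 hle (by positivity)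
    _ = ε / 2 := by
        rw [← Real.rpow_mul (by positivity), mul_one_div, div_self hp0.ne', Real.rpow_one]
    _ < ε := half_lt_self hε
end
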